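/- Let m≥1 be an integer, a₀>0, M≥a₀, τ₀=(M²/(2a₀)+M)^{−1}, and 0<τ<τ₀. Let h₀,…,h_{m-1}>0 and reals a_i∈[a₀,M], |b_i|≤M, |c_i|≤M for i=0,…,m−1. Then for every choice of data w∈ℝ^{m+1}, f₀,…,f_{m-1}∈ℝ, and P,G∈ℝ, there exists a unique u∈ℝ^{m+1} such that for every η∈ℝ^{m+1}: ∑_{i=0}^{m-1} h_i·[a_i·u_{ix}·η_{ix} − b_i·u_{ix}·η_i − c_i·u_i·η_i + f_i·η_i + ((u_i−w_i)/τ)·η_i] + P·η_m + G·η₀ = 0, where u_{ix}=(u_{i+1}−u_i)/h_i and η_{ix}=(η_{i+1}−η_i)/h_i. -/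

import Mathlib

namespace Stmt11Aux

variable {m : ℕ}

noncomputable def bform (τ : ℝ) (h a b c : Fin m → ℝ) (u η : Fin (m+1) → ℝ) : ℝ :=
  ∑ i : Fin m,
    h i * (a i * ((u i.succ - u i.castSucc)/h i) * ((η i.succ - η i.castSucc)/h i)
      - b i * ((u i.succ - u i.castSucc)/h i) * η i.castSucc
      - c i * u i.castSucc * η i.castSucc
      + (u i.castSucc/τ) * η i.castSucc)

noncomputable def lform (τ : ℝ) (h f : Fin m → ℝ) (w : Fin (m+1) → ℝ) (P G : ℝ)
    (η : Fin (m+1) → ℝ) : ℝ :=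
  ∑ i : Fin m, h i * (f i * η i.castSucc - (w i.castSucc/τ) * η i.castSucc)
  + P * η (Fin.last m) + G * η 0

lemma bform_add_left (τ : ℝ) (h a b c : Fin m → ℝ) (u v η : Fin (m+1) → ℝ) :
    bform τ h a b c (u + v) η = bform τ h a b c u η + bform τ h a b c v η := by
  unfold bform
  rw [← Finset.sum_add_distrib]
  refine Finset.sum_congr rfl fun i _ => ?_
  simp only [Pi.add_apply]
  ring

lemma bform_smul_left (τ : ℝ) (h a b c : Fin m → ℝ) (r : ℝ) (u η : Fin (m+1) → ℝ) :
    bform τ h a b c (r • u) η = r * bform τ h a b c u η := by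
  unfold bform
  rw [Finset.mul_sum]
  refine Finset.sum_congr rfl fun i _ => ?_
  simp only [Pi.smul_apply, smul_eq_mul]
  ring

lemma bform_add_right (τ : ℝ) (h a b c : Fin m → ℝ) (u η η' : Fin (m+1) → ℝ) :
    bform τ h a b c u (η + η') = bform τ h a b c u η + bform τ h a b c u η' := by
  unfold bform
  rw [← Finset.sum_add_distrib]
  refine Finset.sum_congr rfl fun i _ => ?_
  simp only [Pi.add_apply]
  ring

lemma bform_smul_right (τ : ℝ) (h a b c : Fin m → ℝ) (r : ℝ) (u η : Fin (m+1) → ℝ) :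
    bform τ h a b c u (r • η) = r * bform τ h a b c u η := by
  unfold bform
  rw [Finset.mul_sum]
  refine Finset.sum_congr rfl fun i _ => ?_
  simp only [Pi.smul_apply, smul_eq_mul]
  ring

lemma lform_add (τ : ℝ) (h f : Fin m → ℝ) (w : Fin (m+1) → ℝ) (P G : ℝ)
    (η η' : Fin (m+1) → ℝ) :
    lform τ h f w P G (η + η') = lform τ h f w P G η + lform τ h f w P G η' := by
  unfold lform
  have : ∀ i ∈ (Finset.univ : Finset (Fin m)),
      h i * (f i * (η + η') i.castSucc - (w i.castSucc/τ) * (η + η') i.castSucc)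
      = h i * (f i * η i.castSucc - (w i.castSucc/τ) * η i.castSucc)
        + h i * (f i * η' i.castSucc - (w i.castSucc/τ) * η' i.castSucc) := by
    intro i _; simp only [Pi.add_apply]; ring
  rw [Finset.sum_congr rfl this, Finset.sum_add_distrib]
  simp only [Pi.add_apply]
  ring

lemma lform_smul (τ : ℝ) (h f : Fin m → ℝ) (w : Fin (m+1) → ℝ) (P G : ℝ)
    (r : ℝ) (η : Fin (m+1) → ℝ) :
    lform τ h f w P G (r • η) = r * lform τ h f w P G η := by
  unfold lform
  rw [mul_add, mul_add, Finset.mul_sum]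
  have : ∀ i ∈ (Finset.univ : Finset (Fin m)),
      h i * (f i * (r • η) i.castSucc - (w i.castSucc/τ) * (r • η) i.castSucc)
      = r * (h i * (f i * η i.castSucc - (w i.castSucc/τ) * η i.castSucc)) := by
    intro i _; simp only [Pi.smul_apply, smul_eq_mul]; ring
  rw [Finset.sum_congr rfl this]
  simp only [Pi.smul_apply, smul_eq_mul]
  ring

/-- decomposition of a vector over the standard basis -/
lemma decomp (η : Fin (m+1) → ℝ) : η = ∑ j, η j • (Pi.single j 1 : Fin (m+1) → ℝ) := by
  funext k
  simp [Finset.sum_apply, Pi.single_apply]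

/-- if a map which is additive+homogeneous in η vanishes on singles, it vanishes -/
lemma vanish (F : (Fin (m+1) → ℝ) → ℝ)
    (hadd : ∀ x y, F (x + y) = F x + F y)
    (hsmul : ∀ (r : ℝ) x, F (r • x) = r * F x)
    (h0 : ∀ j, F (Pi.single j 1) = 0) (η : Fin (m+1) → ℝ) : F η = 0 := by
  let FL : (Fin (m+1) → ℝ) →ₗ[ℝ] ℝ :=
    { toFun := F, map_add' := hadd, map_smul' := fun r x => hsmul r x }
  have hF : F η = FL η := rfl
  rw [hF, decomp η, map_sum]
  simp only [map_smul, smul_eq_mul]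
  have : ∀ j : Fin (m+1), FL (Pi.single j 1) = 0 := h0
  simp [this]

/-- coercivity: bform u u = 0 implies u = 0 -/
lemma coercive (hm : 1 ≤ m) (a₀ M : ℝ) (ha₀ : 0 < a₀) (hM : a₀ ≤ M)
    (τ : ℝ) (hτ0 : 0 < τ) (hτ : τ < (M^2/(2*a₀) + M)⁻¹)
    (h a b c : Fin m → ℝ) (hh : ∀ i, 0 < h i)
    (ha : ∀ i, a i ∈ Set.Icc a₀ M) (hb : ∀ i, |b i| ≤ M) (hc : ∀ i, |c i| ≤ M)
    (u : Fin (m+1) → ℝ) (hu : bform τ h a b c u u = 0) : u = 0 := by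
  have hM0 : 0 < M := lt_of_lt_of_le ha₀ hM
  have hX : 0 < M^2/(2*a₀) + M := by positivity
  have hκ : M^2/(2*a₀) + M < 1/τ := by
    rw [lt_div_iff₀ hτ0]
    calc (M^2/(2*a₀) + M) * τ < (M^2/(2*a₀) + M) * (M^2/(2*a₀) + M)⁻¹ := by
          exact mul_lt_mul_of_pos_left hτ hX
      _ = 1 := mul_inv_cancel₀ (ne_of_gt hX)
  set κ := 1/τ - (M^2/(2*a₀) + M) with hκdef
  have hκpos : 0 < κ := by rw [hκdef]; linarith
  have key : ∀ i : Fin m,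
      h i * ((a₀/2) * ((u i.succ - u i.castSucc)/h i)^2 + κ * (u i.castSucc)^2)
      ≤ h i * (a i * ((u i.succ - u i.castSucc)/h i) * ((u i.succ - u i.castSucc)/h i)
        - b i * ((u i.succ - u i.castSucc)/h i) * u i.castSucc
        - c i * u i.castSucc * u i.castSucc
        + (u i.castSucc/τ) * u i.castSucc) := by
    intro i
    apply mul_le_mul_of_nonneg_left _ (le_of_lt (hh i))
    set d := (u i.succ - u i.castSucc)/h i
    set v := u i.castSucc
    have ha1 : a₀ ≤ a i := (ha i).1
    have hb2 : (b i)^2 ≤ M^2 := by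
      have := sq_abs (b i); nlinarith [hb i, abs_nonneg (b i)]
    have hc1 : c i ≤ M := (abs_le.mp (hc i)).2
    have hdiv : v/τ * v = (1/τ) * v^2 := by ring
    rw [hdiv]
    have expand : κ = 1/τ - M^2/(2*a₀) - M := by rw [hκdef]; ring
    rw [expand]
    have hYoung : b i*d*v ≤ a₀/2*d^2 + M^2/(2*a₀)*v^2 := by
      rw [show a₀/2*d^2 + M^2/(2*a₀)*v^2 = (a₀^2*d^2 + M^2*v^2)/(2*a₀) by field_simp]
      rw [le_div_iff₀ (by positivity)]
      nlinarith [sq_nonneg (a₀*d - b i*v), mul_le_mul_of_nonneg_right hb2 (sq_nonneg v)]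
    have hAd : a₀*d^2 ≤ a i*d^2 := mul_le_mul_of_nonneg_right ha1 (sq_nonneg d)
    have hCv : c i*v^2 ≤ M*v^2 := mul_le_mul_of_nonneg_right hc1 (sq_nonneg v)
    nlinarith [hYoung, hAd, hCv]
  have hSle : ∑ i : Fin m, h i * ((a₀/2) * ((u i.succ - u i.castSucc)/h i)^2 + κ * (u i.castSucc)^2) ≤ 0 := by
    rw [← hu]
    exact Finset.sum_le_sum fun i _ => key i
  have hterm : ∀ i ∈ Finset.univ, (0:ℝ) ≤ h i * ((a₀/2) * ((u i.succ - u i.castSucc)/h i)^2 + κ * (u i.castSucc)^2) := by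
    intro i _
    have := hh i
    positivity
  have hS0 : ∑ i : Fin m, h i * ((a₀/2) * ((u i.succ - u i.castSucc)/h i)^2 + κ * (u i.castSucc)^2) = 0 :=
    le_antisymm hSle (Finset.sum_nonneg hterm)
  have hzero : ∀ i : Fin m, h i * ((a₀/2) * ((u i.succ - u i.castSucc)/h i)^2 + κ * (u i.castSucc)^2) = 0 :=
    fun i => (Finset.sum_eq_zero_iff_of_nonneg hterm).mp hS0 i (Finset.mem_univ i)
  have hv : ∀ i : Fin m, u i.castSucc = 0 := by
    intro i
    have hz := hzero i
    have hhi := hh i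
    by_contra hne
    have : 0 < h i * ((a₀/2) * ((u i.succ - u i.castSucc)/h i)^2 + κ * (u i.castSucc)^2) := by
      have h1 : 0 < κ * (u i.castSucc)^2 := mul_pos hκpos (by positivity)
      have h2 : 0 ≤ (a₀/2) * ((u i.succ - u i.castSucc)/h i)^2 := by positivity
      exact mul_pos hhi (add_pos_of_nonneg_of_pos h2 h1)
    linarith
  have hd : ∀ i : Fin m, u i.succ = u i.castSucc := by
    intro i
    have hz := hzero i
    have hhi := hh i
    by_contra hne
    have hne' : (u i.succ - u i.castSucc)/h i ≠ 0 := by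
      apply div_ne_zero _ (ne_of_gt hhi)
      intro hx; exact hne (by linarith [sub_eq_zero.mp hx])
    have : 0 < h i * ((a₀/2) * ((u i.succ - u i.castSucc)/h i)^2 + κ * (u i.castSucc)^2) := by
      have h1 : 0 < (a₀/2) * ((u i.succ - u i.castSucc)/h i)^2 := by positivity
      have h2 : 0 ≤ κ * (u i.castSucc)^2 := by positivity
      exact mul_pos hhi (add_pos_of_pos_of_nonneg h1 h2)
    linarith
  funext j
  simp only [Pi.zero_apply]
  refine Fin.cases ?_ (fun i => ?_) j
  · exact (show Fin.castSucc ⟨0, hm⟩ = (0 : Fin (m+1)) from rfl) ▸ hv ⟨0, hm⟩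
  · rw [hd i]; exact hv i

/-- splitting the full expression -/
lemma split (τ : ℝ) (h a b c f : Fin m → ℝ) (w : Fin (m+1) → ℝ) (P G : ℝ)
    (u η : Fin (m+1) → ℝ) :
    (∑ i : Fin m,
        h i * (a i * ((u i.succ - u i.castSucc)/h i) * ((η i.succ - η i.castSucc)/h i)
          - b i * ((u i.succ - u i.castSucc)/h i) * η i.castSucc
          - c i * u i.castSucc * η i.castSucc
          + f i * η i.castSucc
          + ((u i.castSucc - w i.castSucc)/τ) * η i.castSucc)
      + P * η (Fin.last m) + G * η 0)
    = bform τ h a b c u η + lform τ h f w P G η := by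
  unfold bform lform
  have : (∑ i : Fin m,
        h i * (a i * ((u i.succ - u i.castSucc)/h i) * ((η i.succ - η i.castSucc)/h i)
          - b i * ((u i.succ - u i.castSucc)/h i) * η i.castSucc
          - c i * u i.castSucc * η i.castSucc
          + f i * η i.castSucc
          + ((u i.castSucc - w i.castSucc)/τ) * η i.castSucc))
      = ∑ i : Fin m,
        (h i * (a i * ((u i.succ - u i.castSucc)/h i) * ((η i.succ - η i.castSucc)/h i)
          - b i * ((u i.succ - u i.castSucc)/h i) * η i.castSucc
          - c i * u i.castSucc * η i.castSucc
          + (u i.castSucc/τ) * η i.castSucc)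
        + h i * (f i * η i.castSucc - (w i.castSucc/τ) * η i.castSucc)) := by
    refine Finset.sum_congr rfl fun i _ => ?_
    ring
  rw [this, Finset.sum_add_distrib]
  ring

end Stmt11Aux

open Stmt11Aux

/-- Lemma 2.1: unique solvability of the discrete scheme at each time step,
expressed through the summation identity (1.17), for time steps below the threshold
`τ₀ = (M²/(2a₀)+M)⁻¹`. -/
theorem stmt_11 (m : ℕ) (hm : 1 ≤ m) (a₀ M : ℝ) (ha₀ : 0 < a₀) (hM : a₀ ≤ M)
    (τ : ℝ) (hτ0 : 0 < τ) (hτ : τ < (M^2/(2*a₀) + M)⁻¹)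
    (h a b c f : Fin m → ℝ) (hh : ∀ i, 0 < h i)
    (ha : ∀ i, a i ∈ Set.Icc a₀ M) (hb : ∀ i, |b i| ≤ M) (hc : ∀ i, |c i| ≤ M)
    (w : Fin (m+1) → ℝ) (P G : ℝ) :
    ∃! u : Fin (m+1) → ℝ, ∀ η : Fin (m+1) → ℝ,
      ∑ i : Fin m,
        h i * (a i * ((u i.succ - u i.castSucc)/h i) * ((η i.succ - η i.castSucc)/h i)
          - b i * ((u i.succ - u i.castSucc)/h i) * η i.castSucc
          - c i * u i.castSucc * η i.castSucc
          + f i * η i.castSucc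
          + ((u i.castSucc - w i.castSucc)/τ) * η i.castSucc)
      + P * η (Fin.last m) + G * η 0 = 0 := by
  classical
  -- the linear operator
  let F : (Fin (m+1) → ℝ) →ₗ[ℝ] (Fin (m+1) → ℝ) :=
    { toFun := fun u j => bform τ h a b c u (Pi.single j 1)
      map_add' := fun u v => by
        funext j; exact bform_add_left τ h a b c u v (Pi.single j 1)
      map_smul' := fun r u => by
        funext j
        simpa using bform_smul_left τ h a b c r u (Pi.single j 1) }
  -- right-hand side
  let g : Fin (m+1) → ℝ := fun j => -(lform τ h f w P G (Pi.single j 1))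
  -- injectivity
  have hinj : Function.Injective F := by
    rw [← LinearMap.ker_eq_bot, LinearMap.ker_eq_bot']
    intro u hu
    have h0 : ∀ j, bform τ h a b c u (Pi.single j 1) = 0 := fun j => congrFun hu j
    have hall : ∀ η, bform τ h a b c u η = 0 :=
      vanish (bform τ h a b c u) (bform_add_right τ h a b c u)
        (fun r x => bform_smul_right τ h a b c r u x) h0
    exact coercive hm a₀ M ha₀ hM τ hτ0 hτ h a b c hh ha hb hc u (hall u)
  have hsurj : Function.Surjective F := (LinearMap.injective_iff_surjective).mp hinj
  -- the equivalence
  have hequiv : ∀ u : Fin (m+1) → ℝ,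
      (∀ η : Fin (m+1) → ℝ,
        ∑ i : Fin m,
          h i * (a i * ((u i.succ - u i.castSucc)/h i) * ((η i.succ - η i.castSucc)/h i)
            - b i * ((u i.succ - u i.castSucc)/h i) * η i.castSucc
            - c i * u i.castSucc * η i.castSucc
            + f i * η i.castSucc
            + ((u i.castSucc - w i.castSucc)/τ) * η i.castSucc)
        + P * η (Fin.last m) + G * η 0 = 0) ↔ F u = g := by
    intro u
    constructor
    · intro H
      funext j
      have := H (Pi.single j 1)
      rw [split τ h a b c f w P G u (Pi.single j 1)] at this
      show bform τ h a b c u (Pi.single j 1) = -(lform τ h f w P G (Pi.single j 1))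
      linarith
    · intro H η
      rw [split τ h a b c f w P G u η]
      refine vanish (fun x => bform τ h a b c u x + lform τ h f w P G x) ?_ ?_ ?_ η
      · intro x y
        rw [bform_add_right, lform_add]; ring
      · intro r x
        rw [bform_smul_right, lform_smul]; ring
      · intro j
        have hj : bform τ h a b c u (Pi.single j 1) = -(lform τ h f w P G (Pi.single j 1)) :=
          congrFun H j
        rw [hj]; ring
  obtain ⟨u₀, hu₀⟩ := hsurj g
  refine ⟨u₀, (hequiv u₀).mpr hu₀, fun y hy => ?_⟩
  exact hinj (((hequiv y).mp hy).trans hu₀.symm)
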